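/- Let φ = (1+√5)/2 and A(x,y,z) = (5−√5)yz⁵ + (5+√5)y⁵z − 20y³z³ + (10+10√5)x²yz³ + (10−10√5)x²y³z − 10x⁴yz. Define on ℝ³ ∖ {0} the functions ϖ(x,y,z) = A(x,y,z)/(x²+y²+z²)², ϱ(x,y,z) = A(y,z,x)/(x²+y²+z²)², σ(x,y,z) = A(z,x,y)/(x²+y²+z²)². Then the icosahedral vector field (ϖ, ϱ, σ) is solenoidal: for every (x,y,z) ≠ (0,0,0), ∂ϖ/∂x + ∂ϱ/∂y + ∂σ/∂z = 0. -/

import Mathlib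

/-- The numerator of the first component of the icosahedral superflow's vector field. -/
noncomputable def A (x y z : ℝ) : ℝ :=
  (5 - Real.sqrt 5) * y * z ^ 5 + (5 + Real.sqrt 5) * y ^ 5 * z - 20 * y ^ 3 * z ^ 3
    + (10 + 10 * Real.sqrt 5) * x ^ 2 * y * z ^ 3 + (10 - 10 * Real.sqrt 5) * x ^ 2 * y ^ 3 * z
    - 10 * x ^ 4 * y * z

/-- First component `ϖ` of the icosahedral vector field. -/
noncomputable def varpi (x y z : ℝ) : ℝ := A x y z / (x ^ 2 + y ^ 2 + z ^ 2) ^ 2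

/-- Second component `ϱ` of the icosahedral vector field. -/
noncomputable def varrho (x y z : ℝ) : ℝ := A y z x / (x ^ 2 + y ^ 2 + z ^ 2) ^ 2

/-- Third component `σ` of the icosahedral vector field. -/
noncomputable def sigmaC (x y z : ℝ) : ℝ := A z x y / (x ^ 2 + y ^ 2 + z ^ 2) ^ 2

/-- Derivative of `A s u v` in its first variable. -/
lemma hasDerivAt_A (u v t : ℝ) : HasDerivAt (fun s : ℝ => A s u v)
    ((10 + 10 * Real.sqrt 5) * (2 * t) * u * v ^ 3
      + (10 - 10 * Real.sqrt 5) * (2 * t) * u ^ 3 * v - 10 * (4 * t ^ 3) * u * v) t := by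
  have h2 : HasDerivAt (fun s : ℝ => s ^ 2) (2 * t) t := by
    simpa using hasDerivAt_pow 2 t
  have h4 : HasDerivAt (fun s : ℝ => s ^ 4) (4 * t ^ 3) t := by
    simpa using hasDerivAt_pow 4 t
  have : HasDerivAt (fun s : ℝ =>
      ((5 - Real.sqrt 5) * u * v ^ 5 + (5 + Real.sqrt 5) * u ^ 5 * v - 20 * u ^ 3 * v ^ 3)
      + (((10 + 10 * Real.sqrt 5) * u * v ^ 3 + (10 - 10 * Real.sqrt 5) * u ^ 3 * v) * s ^ 2
        - 10 * u * v * s ^ 4))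
      (((10 + 10 * Real.sqrt 5) * u * v ^ 3 + (10 - 10 * Real.sqrt 5) * u ^ 3 * v) * (2 * t)
        - 10 * u * v * (4 * t ^ 3)) t :=
    (((h2.const_mul _).sub (h4.const_mul _)).const_add _)
  convert this using 1
  · funext s; unfold A; ring
  · ring

/-- Derivative of the squared-norm-squared denominator in one variable. -/
lemma hasDerivAt_den (a t : ℝ) : HasDerivAt (fun s : ℝ => (s ^ 2 + a) ^ 2)
    (2 * (t ^ 2 + a) * (2 * t)) t := by
  have h2 : HasDerivAt (fun s : ℝ => s ^ 2 + a) (2 * t) t := by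
    simpa using (hasDerivAt_pow 2 t).add_const a
  simpa [Pi.pow_def] using (h2.pow 2)

/-- The icosahedral vector field `(ϖ, ϱ, σ)` is solenoidal on `ℝ³ ∖ {0}`:
`∂ϖ/∂x + ∂ϱ/∂y + ∂σ/∂z = 0`. -/
theorem stmt2 (x y z : ℝ) (h : (x, y, z) ≠ (0, 0, 0)) :
    deriv (fun s => varpi s y z) x + deriv (fun s => varrho x s z) y
      + deriv (fun s => sigmaC x y s) z = 0 := by
  have hsum : x ^ 2 + y ^ 2 + z ^ 2 ≠ 0 := by
    intro hc
    apply h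
    have hx : x = 0 := by nlinarith [sq_nonneg x, sq_nonneg y, sq_nonneg z]
    have hy : y = 0 := by nlinarith [sq_nonneg x, sq_nonneg y, sq_nonneg z]
    have hz : z = 0 := by nlinarith [sq_nonneg x, sq_nonneg y, sq_nonneg z]
    simp [hx, hy, hz]
  have hden : (x ^ 2 + y ^ 2 + z ^ 2) ^ 2 ≠ 0 := pow_ne_zero _ hsum
  -- first component
  have hd1 : HasDerivAt (fun s : ℝ => (s ^ 2 + y ^ 2 + z ^ 2) ^ 2)
      (2 * (x ^ 2 + y ^ 2 + z ^ 2) * (2 * x)) x := by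
    have := hasDerivAt_den (y ^ 2 + z ^ 2) x
    convert this using 2 with s <;> ring
  have h1 : HasDerivAt (fun s : ℝ => varpi s y z)
      ((((10 + 10 * Real.sqrt 5) * (2 * x) * y * z ^ 3
        + (10 - 10 * Real.sqrt 5) * (2 * x) * y ^ 3 * z - 10 * (4 * x ^ 3) * y * z)
        * (x ^ 2 + y ^ 2 + z ^ 2) ^ 2
        - A x y z * (2 * (x ^ 2 + y ^ 2 + z ^ 2) * (2 * x)))
        / ((x ^ 2 + y ^ 2 + z ^ 2) ^ 2) ^ 2) x := by
    have := (hasDerivAt_A y z x).div hd1 hden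
    simpa [varpi, Pi.div_def] using this
  -- second component: varrho x s z = A s z x, denominator (x^2+s^2+z^2)^2
  have hd2 : HasDerivAt (fun s : ℝ => (x ^ 2 + s ^ 2 + z ^ 2) ^ 2)
      (2 * (x ^ 2 + y ^ 2 + z ^ 2) * (2 * y)) y := by
    have := hasDerivAt_den (x ^ 2 + z ^ 2) y
    convert this using 2 with s <;> ring
  have h2 : HasDerivAt (fun s : ℝ => varrho x s z)
      ((((10 + 10 * Real.sqrt 5) * (2 * y) * z * x ^ 3
        + (10 - 10 * Real.sqrt 5) * (2 * y) * z ^ 3 * x - 10 * (4 * y ^ 3) * z * x)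
        * (x ^ 2 + y ^ 2 + z ^ 2) ^ 2
        - A y z x * (2 * (x ^ 2 + y ^ 2 + z ^ 2) * (2 * y)))
        / ((x ^ 2 + y ^ 2 + z ^ 2) ^ 2) ^ 2) y := by
    have := (hasDerivAt_A z x y).div hd2 hden
    simpa [varrho, Pi.div_def] using this
  -- third component: sigmaC x y s = A s x y, denominator (x^2+y^2+s^2)^2
  have hd3 : HasDerivAt (fun s : ℝ => (x ^ 2 + y ^ 2 + s ^ 2) ^ 2)
      (2 * (x ^ 2 + y ^ 2 + z ^ 2) * (2 * z)) z := by
    have := hasDerivAt_den (x ^ 2 + y ^ 2) z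
    convert this using 2 with s <;> ring
  have h3 : HasDerivAt (fun s : ℝ => sigmaC x y s)
      ((((10 + 10 * Real.sqrt 5) * (2 * z) * x * y ^ 3
        + (10 - 10 * Real.sqrt 5) * (2 * z) * x ^ 3 * y - 10 * (4 * z ^ 3) * x * y)
        * (x ^ 2 + y ^ 2 + z ^ 2) ^ 2
        - A z x y * (2 * (x ^ 2 + y ^ 2 + z ^ 2) * (2 * z)))
        / ((x ^ 2 + y ^ 2 + z ^ 2) ^ 2) ^ 2) z := by
    have := (hasDerivAt_A x y z).div hd3 hden
    simpa [sigmaC, Pi.div_def] using this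
  rw [h1.deriv, h2.deriv, h3.deriv]
  unfold A
  field_simp
  ring
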